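/- Let α, β ∈ (0,1], let γ, δ, η, ζ ≥ 0 with d := ηδ + γζ + γη/α > 0, let G be the associated general Green's function, let h : [0,1] → ℝ be continuous, and define x(t) = ∫₀¹ G(t,s) h(s) s^{β−1} ds. Then for every t ∈ (0,1), x is differentiable at t with t^{1−α} x′(t) = −(η/d) ∫₀ᵗ [δ + (γ/α)s^α] h(s) s^{β−1} ds + (γ/d) ∫ₜ¹ [ζ + (η/α)(1 − s^α)] h(s) s^{β−1} ds. -/

import Mathlib

open MeasureTheory intervalIntegral Set

/-- With the setup of the general Green's function problem, for every
`t ∈ (0,1)` the function `x` is differentiable at `t` and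
`t^{1−α} x′(t) = −(η/d) ∫₀ᵗ [δ + (γ/α)s^α] h(s) s^{β−1} ds
 + (γ/d) ∫ₜ¹ [ζ + (η/α)(1 − s^α)] h(s) s^{β−1} ds`. -/
theorem alpha_deriv_of_greens_solution
    (α β : ℝ) (hα : α ∈ Set.Ioc (0:ℝ) 1) (hβ : β ∈ Set.Ioc (0:ℝ) 1)
    (γ δ η ζ : ℝ) (hγ : 0 ≤ γ) (hδ : 0 ≤ δ) (hη : 0 ≤ η) (hζ : 0 ≤ ζ)
    (d : ℝ) (hd : d = η * δ + γ * ζ + γ * η / α) (hdpos : 0 < d)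
    (G : ℝ → ℝ → ℝ)
    (hG : ∀ t s : ℝ, G t s = if s ≤ t
        then (1 / d) * (δ + (γ / α) * s ^ α) * (ζ + (η / α) * (1 - t ^ α))
        else (1 / d) * (δ + (γ / α) * t ^ α) * (ζ + (η / α) * (1 - s ^ α)))
    (h : ℝ → ℝ) (hh : ContinuousOn h (Set.Icc 0 1))
    (x : ℝ → ℝ) (hx : ∀ t : ℝ, x t = ∫ s in (0:ℝ)..1, G t s * h s * s ^ (β - 1)) :
    ∀ t ∈ Set.Ioo (0:ℝ) 1,
      DifferentiableAt ℝ x t ∧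
      t ^ (1 - α) * deriv x t =
        -(η / d) * (∫ s in (0:ℝ)..t, (δ + (γ / α) * s ^ α) * h s * s ^ (β - 1))
          + (γ / d) * ∫ s in t..(1:ℝ), (ζ + (η / α) * (1 - s ^ α)) * h s * s ^ (β - 1) := by
  obtain ⟨hα0, hα1⟩ := hα
  obtain ⟨hβ0, hβ1⟩ := hβ
  intro t ht
  obtain ⟨ht0, ht1⟩ := ht
  have hpow : Continuous fun s : ℝ => s ^ α :=
    continuous_iff_continuousAt.mpr fun y => Real.continuousAt_rpow_const y α (Or.inr hα0.le)
  set p : ℝ → ℝ := fun s => (δ + γ / α * s ^ α) * h s * s ^ (β - 1) with hp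
  set q : ℝ → ℝ := fun s => (ζ + η / α * (1 - s ^ α)) * h s * s ^ (β - 1) with hq
  set A : ℝ → ℝ := fun u => 1 / d * (ζ + η / α * (1 - u ^ α)) with hA
  set B : ℝ → ℝ := fun u => 1 / d * (δ + γ / α * u ^ α) with hB
  -- integrability
  have hint : ∀ (c : ℝ → ℝ), ContinuousOn c (Set.Icc 0 1) → ∀ a b : ℝ,
      a ∈ Set.Icc (0:ℝ) 1 → b ∈ Set.Icc (0:ℝ) 1 →
      IntervalIntegrable (fun s => c s * s ^ (β - 1)) volume a b := by
    intro c hc a b ha hb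
    have hr : IntervalIntegrable (fun s : ℝ => s ^ (β - 1)) volume a b :=
      intervalIntegral.intervalIntegrable_rpow' (by linarith)
    exact hr.continuousOn_mul (hc.mono (Set.uIcc_subset_Icc ha hb))
  have hcp : ContinuousOn (fun s : ℝ => (δ + γ / α * s ^ α) * h s) (Set.Icc 0 1) :=
    ((continuous_const.add (continuous_const.mul hpow)).continuousOn).mul hh
  have hcq : ContinuousOn (fun s : ℝ => (ζ + η / α * (1 - s ^ α)) * h s) (Set.Icc 0 1) :=
    ((continuous_const.add (continuous_const.mul (continuous_const.sub hpow))).continuousOn).mul hh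
  have hintp : ∀ a b : ℝ, a ∈ Set.Icc (0:ℝ) 1 → b ∈ Set.Icc (0:ℝ) 1 →
      IntervalIntegrable p volume a b := by
    intro a b ha hb; rw [hp]; exact hint _ hcp a b ha hb
  have hintq : ∀ a b : ℝ, a ∈ Set.Icc (0:ℝ) 1 → b ∈ Set.Icc (0:ℝ) 1 →
      IntervalIntegrable q volume a b := by
    intro a b ha hb; rw [hq]; exact hint _ hcq a b ha hb
  -- decomposition of x
  have hxeq : ∀ τ ∈ Set.Icc (0:ℝ) 1,
      x τ = A τ * (∫ s in (0:ℝ)..τ, p s) + B τ * ∫ s in τ..(1:ℝ), q s := by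
    intro τ hτ
    have hτ0 := hτ.1
    have hτ1 := hτ.2
    have e1 : Set.EqOn (fun s => G τ s * h s * s ^ (β - 1)) (fun s => A τ * p s)
        (Set.uIcc 0 τ) := by
      intro s hs
      rw [Set.uIcc_of_le hτ0] at hs
      simp only
      rw [hG, if_pos hs.2]
      simp only [hp, hA]
      ring
    have e2 : Set.EqOn (fun s => G τ s * h s * s ^ (β - 1)) (fun s => B τ * q s)
        (Set.uIcc τ 1) := by
      intro s hs
      rw [Set.uIcc_of_le hτ1] at hs
      simp only
      rw [hG]
      split_ifs with hsle
      · have hst : s = τ := le_antisymm hsle hs.1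
        subst hst
        simp only [hq, hB]
        ring
      · simp only [hq, hB]
        ring
    have i1 : IntervalIntegrable (fun s => G τ s * h s * s ^ (β - 1)) volume 0 τ := by
      have h1 : IntervalIntegrable (fun s => A τ * p s) volume 0 τ :=
        (hintp 0 τ ⟨le_refl 0, zero_le_one⟩ hτ).const_mul (A τ)
      rw [intervalIntegrable_iff] at h1 ⊢
      exact h1.congr_fun (fun s hs => (e1 (Set.uIoc_subset_uIcc hs)).symm) measurableSet_uIoc
    have i2 : IntervalIntegrable (fun s => G τ s * h s * s ^ (β - 1)) volume τ 1 := by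
      have h1 : IntervalIntegrable (fun s => B τ * q s) volume τ 1 :=
        (hintq τ 1 hτ ⟨zero_le_one, le_refl 1⟩).const_mul (B τ)
      rw [intervalIntegrable_iff] at h1 ⊢
      exact h1.congr_fun (fun s hs => (e2 (Set.uIoc_subset_uIcc hs)).symm) measurableSet_uIoc
    rw [hx τ, ← intervalIntegral.integral_add_adjacent_intervals i1 i2,
      intervalIntegral.integral_congr e1, intervalIntegral.integral_congr e2,
      intervalIntegral.integral_const_mul, intervalIntegral.integral_const_mul]
  -- pointwise continuity on (0,1)
  have hpcAt : ∀ s ∈ Set.Ioo (0:ℝ) 1, ContinuousAt p s := by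
    intro s hs
    have hhs : ContinuousAt h s :=
      (hh s ⟨hs.1.le, hs.2.le⟩).continuousAt (Icc_mem_nhds hs.1 hs.2)
    have hrs : ContinuousAt (fun u : ℝ => u ^ (β - 1)) s :=
      Real.continuousAt_rpow_const s (β - 1) (Or.inl hs.1.ne')
    rw [hp]
    exact ((continuous_const.add (continuous_const.mul hpow)).continuousAt.mul hhs).mul hrs
  have hqcAt : ∀ s ∈ Set.Ioo (0:ℝ) 1, ContinuousAt q s := by
    intro s hs
    have hhs : ContinuousAt h s :=
      (hh s ⟨hs.1.le, hs.2.le⟩).continuousAt (Icc_mem_nhds hs.1 hs.2)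
    have hrs : ContinuousAt (fun u : ℝ => u ^ (β - 1)) s :=
      Real.continuousAt_rpow_const s (β - 1) (Or.inl hs.1.ne')
    rw [hq]
    exact ((continuous_const.add
      (continuous_const.mul (continuous_const.sub hpow))).continuousAt.mul hhs).mul hrs
  have hIoo : Set.Ioo (0:ℝ) 1 ∈ nhds t := Ioo_mem_nhds ht0 ht1
  have hpm : StronglyMeasurableAtFilter p (nhds t) volume :=
    ⟨Set.Ioo 0 1, hIoo,
      ContinuousOn.aestronglyMeasurable
        (fun s hs => (hpcAt s hs).continuousWithinAt) measurableSet_Ioo⟩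
  have hqm : StronglyMeasurableAtFilter q (nhds t) volume :=
    ⟨Set.Ioo 0 1, hIoo,
      ContinuousOn.aestronglyMeasurable
        (fun s hs => (hqcAt s hs).continuousWithinAt) measurableSet_Ioo⟩
  -- FTC
  have hPder : HasDerivAt (fun u => ∫ s in (0:ℝ)..u, p s) (p t) t :=
    intervalIntegral.integral_hasDerivAt_right
      (hintp 0 t ⟨le_refl 0, zero_le_one⟩ ⟨ht0.le, ht1.le⟩) hpm (hpcAt t ⟨ht0, ht1⟩)
  have hQder : HasDerivAt (fun u => ∫ s in u..(1:ℝ), q s) (-q t) t :=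
    intervalIntegral.integral_hasDerivAt_left
      (hintq t 1 ⟨ht0.le, ht1.le⟩ ⟨zero_le_one, le_refl 1⟩) hqm (hqcAt t ⟨ht0, ht1⟩)
  -- derivatives of A, B
  have hpowder : HasDerivAt (fun u : ℝ => u ^ α) (α * t ^ (α - 1)) t :=
    Real.hasDerivAt_rpow_const (Or.inl ht0.ne')
  have hAder : HasDerivAt A (-(η / d) * t ^ (α - 1)) t := by
    have h1 : HasDerivAt (fun u : ℝ => 1 / d * (ζ + η / α * (1 - u ^ α)))
        (1 / d * (η / α * -(α * t ^ (α - 1)))) t :=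
      (((hpowder.const_sub 1).const_mul (η / α)).const_add ζ).const_mul (1 / d)
    rw [hA]
    convert h1 using 1
    field_simp
  have hBder : HasDerivAt B (γ / d * t ^ (α - 1)) t := by
    have h1 : HasDerivAt (fun u : ℝ => 1 / d * (δ + γ / α * u ^ α))
        (1 / d * (γ / α * (α * t ^ (α - 1)))) t :=
      ((hpowder.const_mul (γ / α)).const_add δ).const_mul (1 / d)
    rw [hB]
    convert h1 using 1
    field_simp
  have hXder : HasDerivAt (fun u => A u * (∫ s in (0:ℝ)..u, p s) + B u * ∫ s in u..(1:ℝ), q s)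
      (-(η / d) * t ^ (α - 1) * (∫ s in (0:ℝ)..t, p s) + A t * p t
        + (γ / d * t ^ (α - 1) * (∫ s in t..(1:ℝ), q s) + B t * -q t)) t :=
    (hAder.mul hPder).add (hBder.mul hQder)
  have hxX : x =ᶠ[nhds t]
      fun u => A u * (∫ s in (0:ℝ)..u, p s) + B u * ∫ s in u..(1:ℝ), q s :=
    Filter.eventuallyEq_of_mem hIoo fun τ hτ => hxeq τ ⟨hτ.1.le, hτ.2.le⟩
  have hxder : HasDerivAt x
      (t ^ (α - 1) * (-(η / d) * (∫ s in (0:ℝ)..t, p s) + γ / d * ∫ s in t..(1:ℝ), q s)) t := by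
    have h2 := hXder.congr_of_eventuallyEq hxX
    refine h2.congr_deriv ?_
    have hcancel : A t * p t + B t * -q t = 0 := by
      simp only [hp, hq, hA, hB]
      ring
    linear_combination hcancel
  refine ⟨hxder.differentiableAt, ?_⟩
  have hone : t ^ (1 - α) * t ^ (α - 1) = 1 := by
    rw [← Real.rpow_add ht0, show (1 - α) + (α - 1) = 0 by ring, Real.rpow_zero]
  rw [hxder.deriv, ← mul_assoc, hone, one_mul]
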